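/- For any integer K ≥ 1 and probability p ∈ (0,1], the quantity h(K,p) = Σ_{k=1}^{K} (1/k²) · C(K,k) p^k (1-p)^{K-k} satisfies h(K,p) ≤ 6/(K²·p²). -/

import Mathlib

theorem stmt_1 (K : ℕ) (hK : 1 ≤ K) (p : ℝ) (hp : 0 < p) (hp1 : p ≤ 1) :
    ∑ k ∈ Finset.Icc 1 K,
      (1 / (k : ℝ) ^ 2) * (K.choose k : ℝ) * p ^ k * (1 - p) ^ (K - k)
      ≤ 6 / ((K : ℝ) ^ 2 * p ^ 2) := by
  set q : ℝ := 1 - p with hq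
  have hq0 : 0 ≤ q := by simp only [hq]; linarith
  have hp0 : (0:ℝ) ≤ p := hp.le
  have hK1 : (1:ℝ) ≤ (K:ℝ) := by exact_mod_cast hK
  have hKpos : (0:ℝ) < ((K:ℝ)+1)*((K:ℝ)+2) := by nlinarith
  -- binomial identity
  have hident : ∀ k : ℕ, ((k:ℝ)+1)*((k:ℝ)+2)*((K+2).choose (k+2) : ℝ)
      = ((K:ℝ)+1)*((K:ℝ)+2)*(K.choose k : ℝ) := by
    intro k
    have h1 := Nat.add_one_mul_choose_eq K k
    have h2 := Nat.add_one_mul_choose_eq (K+1) (k+1)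
    have h1' : ((K:ℝ)+1) * (K.choose k : ℝ) = ((K+1).choose (k+1) : ℝ) * ((k:ℝ)+1) := by
      exact_mod_cast congrArg (Nat.cast (R := ℝ)) h1
    have h2' : ((K:ℝ)+2) * ((K+1).choose (k+1) : ℝ)
        = ((K+2).choose (k+2) : ℝ) * ((k:ℝ)+2) := by
      have := congrArg (Nat.cast (R := ℝ)) h2
      push_cast at this
      push_cast
      linarith [this]
    nlinarith [h1', h2']
  -- step 1: termwise bound
  have step1 : ∑ k ∈ Finset.Icc 1 K,
      (1 / (k : ℝ) ^ 2) * (K.choose k : ℝ) * p ^ k * q ^ (K - k)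
      ≤ ∑ k ∈ Finset.Icc 1 K,
      (6 / (((K:ℝ)+1)*((K:ℝ)+2))) * ((K+2).choose (k+2) : ℝ) * p ^ k * q ^ (K - k) := by
    apply Finset.sum_le_sum
    intro k hk
    have hk1 : 1 ≤ k := (Finset.mem_Icc.mp hk).1
    have hkr : (1:ℝ) ≤ (k:ℝ) := by exact_mod_cast hk1
    have hpk : (0:ℝ) ≤ p ^ k * q ^ (K - k) := by positivity
    have key : (1 / (k : ℝ) ^ 2) * (K.choose k : ℝ)
        ≤ (6 / (((K:ℝ)+1)*((K:ℝ)+2))) * ((K+2).choose (k+2) : ℝ) := by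
      rw [div_mul_eq_mul_div, div_mul_eq_mul_div, div_le_div_iff₀ (by nlinarith) hKpos]
      have hC2 : (0:ℝ) ≤ ((K+2).choose (k+2) : ℝ) := by positivity
      have hfac : (0:ℝ) ≤ ((K+2).choose (k+2) : ℝ) * (((k:ℝ)-1)*(5*(k:ℝ)+2)) :=
        mul_nonneg hC2 (by nlinarith)
      nlinarith [hident k]
    calc (1 / (k : ℝ) ^ 2) * (K.choose k : ℝ) * p ^ k * q ^ (K - k)
        = ((1 / (k : ℝ) ^ 2) * (K.choose k : ℝ)) * (p ^ k * q ^ (K - k)) := by ring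
      _ ≤ ((6 / (((K:ℝ)+1)*((K:ℝ)+2))) * ((K+2).choose (k+2) : ℝ)) * (p ^ k * q ^ (K - k)) :=
          mul_le_mul_of_nonneg_right key hpk
      _ = (6 / (((K:ℝ)+1)*((K:ℝ)+2))) * ((K+2).choose (k+2) : ℝ) * p ^ k * q ^ (K - k) := by ring
  -- step 2: shifted binomial sum
  have step2 : ∑ k ∈ Finset.Icc 1 K, ((K+2).choose (k+2) : ℝ) * p ^ k * q ^ (K - k)
      ≤ 1 / p ^ 2 := by
    have hshift : ∑ k ∈ Finset.Icc 1 K, ((K+2).choose (k+2) : ℝ) * p ^ (k+2) * q ^ ((K+2) - (k+2))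
        = ∑ j ∈ Finset.Icc 3 (K+2), ((K+2).choose j : ℝ) * p ^ j * q ^ ((K+2) - j) := by
      rw [show Finset.Icc 3 (K+2) = Finset.map (addRightEmbedding 2) (Finset.Icc 1 K) by
        rw [Finset.map_add_right_Icc]]
      rw [Finset.sum_map]
      rfl
    have hsub : ∑ j ∈ Finset.Icc 3 (K+2), ((K+2).choose j : ℝ) * p ^ j * q ^ ((K+2) - j)
        ≤ ∑ j ∈ Finset.range (K+3), ((K+2).choose j : ℝ) * p ^ j * q ^ ((K+2) - j) := by
      apply Finset.sum_le_sum_of_subset_of_nonneg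
      · intro j hj
        simp only [Finset.mem_Icc] at hj
        simp only [Finset.mem_range]
        omega
      · intro j _ _
        positivity
    have hfull : ∑ j ∈ Finset.range (K+3), ((K+2).choose j : ℝ) * p ^ j * q ^ ((K+2) - j) = 1 := by
      have := add_pow p q (K+2)
      simp only [hq] at this ⊢
      rw [show p + (1 - p) = 1 by ring] at this
      rw [one_pow] at this
      calc ∑ j ∈ Finset.range (K+3), ((K+2).choose j : ℝ) * p ^ j * (1-p) ^ ((K+2) - j)
          = ∑ j ∈ Finset.range (K+2+1), p ^ j * (1-p) ^ ((K+2) - j) * ((K+2).choose j : ℝ) := by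
            apply Finset.sum_congr rfl; intro j _; ring
        _ = 1 := this.symm
    have hmain : p ^ 2 * (∑ k ∈ Finset.Icc 1 K, ((K+2).choose (k+2) : ℝ) * p ^ k * q ^ (K - k)) ≤ 1 := by
      rw [Finset.mul_sum]
      calc ∑ k ∈ Finset.Icc 1 K, p ^ 2 * (((K+2).choose (k+2) : ℝ) * p ^ k * q ^ (K - k))
          = ∑ k ∈ Finset.Icc 1 K, ((K+2).choose (k+2) : ℝ) * p ^ (k+2) * q ^ ((K+2) - (k+2)) := by
            apply Finset.sum_congr rfl
            intro k hk
            rw [show (K+2) - (k+2) = K - k by omega, pow_add]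
            ring
        _ = ∑ j ∈ Finset.Icc 3 (K+2), ((K+2).choose j : ℝ) * p ^ j * q ^ ((K+2) - j) := hshift
        _ ≤ 1 := by rw [← hfull]; exact hsub
    rw [le_div_iff₀ (by positivity)]
    linarith [hmain]
  -- combine
  have hp2 : (0:ℝ) < p ^ 2 := by positivity
  calc ∑ k ∈ Finset.Icc 1 K,
      (1 / (k : ℝ) ^ 2) * (K.choose k : ℝ) * p ^ k * q ^ (K - k)
      ≤ ∑ k ∈ Finset.Icc 1 K,
        (6 / (((K:ℝ)+1)*((K:ℝ)+2))) * ((K+2).choose (k+2) : ℝ) * p ^ k * q ^ (K - k) := step1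
    _ = (6 / (((K:ℝ)+1)*((K:ℝ)+2))) *
        ∑ k ∈ Finset.Icc 1 K, ((K+2).choose (k+2) : ℝ) * p ^ k * q ^ (K - k) := by
        rw [Finset.mul_sum]; apply Finset.sum_congr rfl; intro k _; ring
    _ ≤ (6 / (((K:ℝ)+1)*((K:ℝ)+2))) * (1 / p ^ 2) := by
        apply mul_le_mul_of_nonneg_left step2 (by positivity)
    _ = 6 / ((((K:ℝ)+1)*((K:ℝ)+2)) * p ^ 2) := by
        field_simp
    _ ≤ 6 / ((K : ℝ) ^ 2 * p ^ 2) := by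
        apply div_le_div_of_nonneg_left (by norm_num) (by positivity)
        nlinarith
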